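/- For all natural numbers n and s, the following identity holds in ℚ: Σ_{m=1}^{n} Σ_{q=1}^{min(m,s)} C(s,q) · ( ε(m,q) + Σ_{(n₁,…,n_q) ∈ Ω_q(m)} ⌊(1/2)·∏_{j=1}^{q}(n_j+1)⌋ ) = T(n,2s) + T(⌊n/2⌋,s). -/

import Mathlib

open Finset PowerSeries

lemma sumAT_eq_coeff_pow (g : ℕ → ℚ) :
    ∀ q m : ℕ, (∑ f ∈ Finset.Nat.antidiagonalTuple q m, ∏ j, g (f j))
      = PowerSeries.coeff m ((PowerSeries.mk g) ^ q) := by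
  intro q
  induction q with
  | zero =>
    intro m
    cases m with
    | zero => simp [Finset.Nat.antidiagonalTuple_zero_zero]
    | succ k => simp [Finset.Nat.antidiagonalTuple_zero_succ, PowerSeries.coeff_one]
  | succ q ih =>
    intro m
    rw [pow_succ, PowerSeries.coeff_mul]
    have hcongr : ∀ p ∈ Finset.HasAntidiagonal.antidiagonal m,
        (PowerSeries.coeff p.1 ((PowerSeries.mk g) ^ q)) * PowerSeries.coeff p.2 (PowerSeries.mk g)
        = ∑ t ∈ Finset.Nat.antidiagonalTuple q p.1, (∏ j, g (t j)) * g p.2 := by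
      intro p _
      rw [← ih, Finset.sum_mul, PowerSeries.coeff_mk]
    rw [Finset.sum_congr rfl hcongr, Finset.sum_sigma']
    refine Finset.sum_bij'
      (i := fun (f : Fin (q+1) → ℕ) (_ : f ∈ Finset.Nat.antidiagonalTuple (q+1) m) =>
        (⟨(∑ j : Fin q, f j.castSucc, f (Fin.last q)), Fin.init f⟩ :
          Σ _p : ℕ × ℕ, Fin q → ℕ))
      (j := fun (x : Σ _p : ℕ × ℕ, Fin q → ℕ) _ => (Fin.snoc x.2 x.1.2 : Fin (q+1) → ℕ))
      ?_ ?_ ?_ ?_ ?_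
    · intro f hf
      simp only [Finset.mem_sigma, Finset.Nat.mem_antidiagonalTuple] at hf ⊢
      refine ⟨?_, ?_⟩
      · rw [Finset.HasAntidiagonal.mem_antidiagonal, ← hf, Fin.sum_univ_castSucc]
      · simp [Fin.init]
    · intro x hx
      simp only [Finset.mem_sigma, Finset.Nat.mem_antidiagonalTuple,
        Finset.HasAntidiagonal.mem_antidiagonal] at hx ⊢
      rw [Fin.sum_univ_castSucc]
      simp only [Fin.snoc_castSucc, Fin.snoc_last]
      rw [hx.2, hx.1]
    · intro f _
      exact Fin.snoc_init_self f
    · rintro ⟨⟨a, b⟩, t⟩ hx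
      simp only [Finset.mem_sigma, Finset.HasAntidiagonal.mem_antidiagonal,
        Finset.Nat.mem_antidiagonalTuple] at hx
      simp only [Fin.snoc_last, Fin.snoc_castSucc, Fin.init_snoc, hx.2]
    · intro f _
      rw [Fin.prod_univ_castSucc]
      simp [Fin.init]

open Finset PowerSeries

noncomputable def phi : ℚ⟦X⟧ := PowerSeries.mk (fun n => if n = 0 then 0 else (n : ℚ) + 1)
noncomputable def psi : ℚ⟦X⟧ := PowerSeries.mk (fun n => if n = 0 then 0 else (1 : ℚ))

lemma invOneSubPow_pow (a b : ℕ) :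
    (PowerSeries.invOneSubPow ℚ a) ^ b = PowerSeries.invOneSubPow ℚ (a * b) := by
  rw [PowerSeries.invOneSubPow_eq_inv_one_sub_pow, PowerSeries.invOneSubPow_eq_inv_one_sub_pow,
    ← pow_mul]

lemma one_add_phi : (1 : ℚ⟦X⟧) + phi = (PowerSeries.invOneSubPow ℚ 2).val := by
  rw [show (2:ℕ) = 1 + 1 from rfl, PowerSeries.invOneSubPow_val_succ_eq_mk_add_choose]
  ext n
  cases n with
  | zero => simp [phi]
  | succ k =>
    simp [phi, PowerSeries.coeff_one, Nat.choose_one_right]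
    push_cast
    ring

lemma psi_eq : psi = PowerSeries.X * (PowerSeries.invOneSubPow ℚ 1).val := by
  rw [show (1:ℕ) = 0 + 1 from rfl, PowerSeries.invOneSubPow_val_succ_eq_mk_add_choose]
  ext n
  cases n with
  | zero => simp [psi]
  | succ k =>
    rw [PowerSeries.coeff_succ_X_mul]
    simp [psi, PowerSeries.coeff_mk]

lemma coeff_psi_pow (q k : ℕ) (hq : 1 ≤ q) (hk : 1 ≤ k) :
    PowerSeries.coeff k (psi ^ q) = ((k - 1).choose (q - 1) : ℚ) := by
  rw [psi_eq, mul_pow, ← Units.val_pow_eq_pow_val, invOneSubPow_pow, one_mul,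
    PowerSeries.coeff_X_pow_mul']
  by_cases h : q ≤ k
  · rw [if_pos h, PowerSeries.invOneSubPow_val_eq_mk_sub_one_add_choose_of_pos ℚ q hq,
      PowerSeries.coeff_mk]
    congr 2
    omega
  · rw [if_neg h, Nat.choose_eq_zero_of_lt (by omega), Nat.cast_zero]

lemma sum_prod_eq_zero_of_lt (g : ℕ → ℚ) (hg : g 0 = 0) (q m : ℕ) (h : m < q) :
    ∑ f ∈ Finset.Nat.antidiagonalTuple q m, ∏ j, g (f j) = 0 := by
  refine Finset.sum_eq_zero fun f hf => ?_
  rw [Finset.Nat.mem_antidiagonalTuple] at hf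
  obtain ⟨j, hj⟩ : ∃ j, f j = 0 := by
    by_contra hc
    push_neg at hc
    have hq : q ≤ ∑ i, f i := by
      calc q = ∑ _i : Fin q, 1 := by simp
      _ ≤ ∑ i, f i := Finset.sum_le_sum fun i _ => Nat.one_le_iff_ne_zero.mpr (hc i)
    omega
  exact Finset.prod_eq_zero (Finset.mem_univ j) (by rw [hj, hg])

lemma sum_AT_filter (G : ℕ → ℚ) (q m : ℕ) :
    ∑ f ∈ Finset.Nat.antidiagonalTuple q m, ∏ j, (if f j = 0 then 0 else G (f j))
      = ∑ f ∈ (Finset.Nat.antidiagonalTuple q m).filter (fun f => ∀ j, 0 < f j),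
          ∏ j, G (f j) := by
  rw [← Finset.sum_filter_of_ne (p := fun f => ∀ j, 0 < f j)
    (fun f _ hne j => ?_)]
  · refine Finset.sum_congr rfl fun f hf => ?_
    rw [Finset.mem_filter] at hf
    refine Finset.prod_congr rfl fun j _ => ?_
    rw [if_neg (Nat.pos_iff_ne_zero.mp (hf.2 j))]
  · by_contra h0
    push_neg at h0
    exact hne (Finset.prod_eq_zero (Finset.mem_univ j) (by rw [if_pos (by omega)]))

lemma coeff_one_add_pow (φ : ℚ⟦X⟧) (s m : ℕ) :
    PowerSeries.coeff m ((1 + φ) ^ s)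
      = ∑ q ∈ Finset.range (s+1), (s.choose q : ℚ) * PowerSeries.coeff m (φ ^ q) := by
  rw [add_comm, add_pow, map_sum]
  refine Finset.sum_congr rfl fun q hq => ?_
  rw [one_pow, mul_one, ← map_natCast (PowerSeries.C (R := ℚ)), PowerSeries.coeff_mul_C, mul_comm]

lemma key1 (s n : ℕ) :
    ∑ q ∈ Finset.Icc 1 (min (n+1) s), (s.choose q : ℚ) *
        ∑ f ∈ (Finset.Nat.antidiagonalTuple q (n+1)).filter (fun f => ∀ j, 0 < f j),
          ∏ j, ((f j : ℚ) + 1)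
      = ((n+1+2*s).choose (2*s) : ℚ) - ((n+2*s).choose (2*s) : ℚ) := by
  rcases Nat.eq_zero_or_pos s with hs | hs
  · subst hs; simp
  · have hg : ∀ q, (∑ f ∈ (Finset.Nat.antidiagonalTuple q (n+1)).filter (fun f => ∀ j, 0 < f j),
        ∏ j, ((f j : ℚ) + 1)) = PowerSeries.coeff (n+1) (phi ^ q) := by
      intro q
      rw [← sum_AT_filter (fun t => (t : ℚ) + 1) q (n+1)]
      simp only [phi]
      rw [← sumAT_eq_coeff_pow]
    simp_rw [hg]
    have hsub : Finset.Icc 1 (min (n+1) s) ⊆ Finset.range (s+1) := by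
      intro q hq
      simp only [Finset.mem_Icc, Finset.mem_range] at hq ⊢
      omega
    rw [Finset.sum_subset hsub (fun q hq hq' => ?_), ← coeff_one_add_pow, one_add_phi,
      ← Units.val_pow_eq_pow_val, invOneSubPow_pow,
      PowerSeries.invOneSubPow_val_eq_mk_sub_one_add_choose_of_pos ℚ (2*s) (by omega),
      PowerSeries.coeff_mk]
    · have hnat : ∀ t : ℕ, (n+1+(t+1)).choose (t+1)
          = (n+(t+1)).choose (t+1) + (t+(n+1)).choose t := by
        intro t
        rw [show n+1+(t+1) = (n+(t+1))+1 by ring, Nat.choose_succ_succ]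
        rw [show t+(n+1) = n+(t+1) by ring]
        ring
      obtain ⟨t, ht⟩ : ∃ t, 2*s = t+1 := ⟨2*s-1, by omega⟩
      rw [show 2*s-1 = t by omega, ht, hnat t]
      push_cast
      ring
    · simp only [Finset.mem_range, Finset.mem_Icc, not_and_or, not_le] at hq hq'
      rcases hq' with h0 | h1
      · interval_cases q
        simp [PowerSeries.coeff_one]
      · have hqn : n+1 < q := by omega
        simp only [phi]
        rw [← sumAT_eq_coeff_pow, sum_prod_eq_zero_of_lt (fun t => if t = 0 then 0 else (t:ℚ)+1) (by norm_num) q (n+1) hqn]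
        ring

lemma key2_aux (a b : ℕ) :
    ∑ q ∈ Finset.Icc 1 (min (2*(a+1)) (b+1)), ((b+1).choose q : ℚ) * (a.choose (q-1) : ℚ)
      = ((b + (a+1)).choose (a+1) : ℚ) := by
  have hvdm : ((b+1) + a).choose (a+1)
      = ∑ i ∈ Finset.range (a+2), (b+1).choose i * a.choose (a+1-i) := by
    rw [Nat.add_choose_eq, Finset.Nat.sum_antidiagonal_eq_sum_range_succ_mk]
  have hstep : ∑ i ∈ Finset.range (a+2), (b+1).choose i * a.choose (a+1-i)
      = ∑ i ∈ Finset.Icc 1 (a+1), (b+1).choose i * a.choose (i-1) := by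
    rw [← Finset.sum_filter_of_ne (p := fun i => i ∈ Finset.Icc 1 (a+1)) ?h]
    · rw [Finset.filter_mem_eq_inter]
      have hint : Finset.range (a+2) ∩ Finset.Icc 1 (a+1) = Finset.Icc 1 (a+1) := by
        ext i; simp only [Finset.mem_inter, Finset.mem_range, Finset.mem_Icc]; omega
      rw [hint]
      refine Finset.sum_congr rfl fun i hi => ?_
      rw [Finset.mem_Icc] at hi
      congr 1
      have h2 : ((i-1)+(a+1-i)).choose (i-1) = ((i-1)+(a+1-i)).choose (a+1-i) :=
        Nat.choose_symm_add
      rw [show (i-1)+(a+1-i) = a by omega] at h2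
      exact h2.symm
    · intro i hi hne
      simp only [Finset.mem_range] at hi
      simp only [Finset.mem_Icc]
      refine ⟨?_, by omega⟩
      by_contra h0
      have hi0 : i = 0 := by omega
      subst hi0
      have hz : a.choose (a+1-0) = 0 := Nat.choose_eq_zero_of_lt (by omega)
      exact hne (by rw [hz, mul_zero])
  have hpad : ∑ q ∈ Finset.Icc 1 (min (2*(a+1)) (b+1)), ((b+1).choose q : ℚ) * (a.choose (q-1) : ℚ)
      = ∑ q ∈ Finset.Icc 1 (a+1), ((b+1).choose q : ℚ) * (a.choose (q-1) : ℚ) := by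
    have h1 : ∀ q ∈ Finset.Icc 1 (a+b+2), q ∉ Finset.Icc 1 (min (2*(a+1)) (b+1)) →
        ((b+1).choose q : ℚ) * (a.choose (q-1) : ℚ) = 0 := by
      intro q hq hq'
      simp only [Finset.mem_Icc] at hq hq'
      rcases Nat.lt_or_ge (b+1) q with h | h
      · rw [Nat.choose_eq_zero_of_lt h]; push_cast; ring
      · have hz : a.choose (q-1) = 0 := Nat.choose_eq_zero_of_lt (by omega)
        rw [hz]; push_cast; ring
    have h2 : ∀ q ∈ Finset.Icc 1 (a+b+2), q ∉ Finset.Icc 1 (a+1) →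
        ((b+1).choose q : ℚ) * (a.choose (q-1) : ℚ) = 0 := by
      intro q hq hq'
      simp only [Finset.mem_Icc] at hq hq'
      have hz : a.choose (q-1) = 0 := Nat.choose_eq_zero_of_lt (by omega)
      rw [hz]; push_cast; ring
    rw [Finset.sum_subset (Finset.Icc_subset_Icc_right (by omega)) h1,
      Finset.sum_subset (Finset.Icc_subset_Icc_right (by omega)) h2]
  rw [hpad, show b + (a+1) = (b+1) + a by ring, hvdm, hstep]
  push_cast
  rfl

lemma key2 (s k : ℕ) (hk : 1 ≤ k) :
    ∑ q ∈ Finset.Icc 1 (min (2*k) s), (s.choose q : ℚ) * ((k-1).choose (q-1) : ℚ)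
      = ((k+s).choose s : ℚ) - ((k-1+s).choose s : ℚ) := by
  rcases Nat.eq_zero_or_pos s with hs | hs
  · subst hs; simp
  · obtain ⟨a, ha⟩ : ∃ a, k = a+1 := ⟨k-1, by omega⟩
    obtain ⟨b, hb⟩ : ∃ b, s = b+1 := ⟨s-1, by omega⟩
    subst ha hb
    simp only [Nat.add_sub_cancel]
    rw [key2_aux a b]
    have hpas : (a+1+(b+1)).choose (b+1) = (a+(b+1)).choose b + (a+(b+1)).choose (b+1) := by
      rw [show a+1+(b+1) = (a+(b+1))+1 by ring]
      exact Nat.choose_succ_succ _ _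
    have hsymm : (b + (a+1)).choose (a+1) = (a+(b+1)).choose b := by
      rw [show a+(b+1) = b+(a+1) by ring]
      exact Nat.choose_symm_add.symm
    rw [hsymm, hpas]
    push_cast
    ring

lemma odd_prod_iff {q : ℕ} (f : Fin q → ℕ) : Odd (∏ j, f j) ↔ ∀ j, Odd (f j) := by
  induction q with
  | zero => simp
  | succ q ih =>
    rw [Fin.prod_univ_castSucc, Nat.odd_mul, ih]
    constructor
    · rintro ⟨h1, h2⟩ j
      exact Fin.lastCases h2 h1 j
    · intro h
      exact ⟨fun j => h j.castSucc, h (Fin.last q)⟩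

lemma floor_half_prod {q : ℕ} (f : Fin q → ℕ) :
    (⌊(1/2 : ℚ) * ∏ j, ((f j : ℚ) + 1)⌋ : ℚ)
      = (1/2) * ∏ j, ((f j : ℚ) + 1) - (1/2) * (if ∀ j, Even (f j) then 1 else 0) := by
  have hN : ∏ j, ((f j : ℚ) + 1) = ((∏ j, (f j + 1) : ℕ) : ℚ) := by push_cast; rfl
  rw [hN]
  set N := ∏ j, (f j + 1) with hNdef
  have hpar : Odd N ↔ ∀ j, Even (f j) := by
    rw [hNdef, odd_prod_iff]
    constructor
    · intro h j
      have h2 := h j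
      rw [Nat.odd_iff] at h2
      rw [Nat.even_iff]
      omega
    · intro h j
      have h2 := h j
      rw [Nat.even_iff] at h2
      rw [Nat.odd_iff]
      omega
  rcases Nat.even_or_odd N with he | ho
  · have hne : ¬ (∀ j, Even (f j)) := by
      rw [← hpar, Nat.odd_iff]
      rw [Nat.even_iff] at he
      omega
    obtain ⟨t, ht⟩ := he
    rw [if_neg hne, ht]
    have h1 : (1/2 : ℚ) * ((t + t : ℕ) : ℚ) = (t : ℚ) := by push_cast; ring
    rw [h1, Int.floor_natCast]
    push_cast; ring
  · rw [if_pos (hpar.mp ho)]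
    obtain ⟨t, ht⟩ := ho
    rw [ht]
    have h1 : (1/2 : ℚ) * ((2*t + 1 : ℕ) : ℚ) = (t : ℚ) + 1/2 := by push_cast; ring
    rw [h1]
    have h2 : ⌊(t : ℚ) + 1/2⌋ = (t : ℤ) := by
      rw [Int.floor_eq_iff]
      push_cast
      constructor <;> linarith
    rw [h2]
    push_cast; ring

lemma evenCount (q m : ℕ) (hq : 1 ≤ q) (hm : 1 ≤ m) :
    ∑ f ∈ (Finset.Nat.antidiagonalTuple q m).filter (fun f => ∀ j, 0 < f j),
        (if ∀ j, Even (f j) then (1:ℚ) else 0)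
      = if Even m then ((m/2 - 1).choose (q-1) : ℚ) else 0 := by
  have h1 : ∑ f ∈ (Finset.Nat.antidiagonalTuple q m).filter (fun f => ∀ j, 0 < f j),
        (if ∀ j, Even (f j) then (1:ℚ) else 0)
      = ∑ f ∈ Finset.Nat.antidiagonalTuple q m,
          ∏ j, (if f j = 0 then (0:ℚ) else if Even (f j) then 1 else 0) := by
    rw [sum_AT_filter (fun t => if Even t then (1:ℚ) else 0) q m]
    refine Finset.sum_congr rfl fun f hf => ?_
    rw [Fintype.prod_boole]
    congr 1
  rw [h1]
  by_cases hev : Even m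
  · rw [if_pos hev]
    obtain ⟨k, hk⟩ := hev
    have hk1 : 1 ≤ k := by omega
    have h2 : ∑ f ∈ Finset.Nat.antidiagonalTuple q m,
          ∏ j, (if f j = 0 then (0:ℚ) else if Even (f j) then 1 else 0)
        = ∑ f ∈ (Finset.Nat.antidiagonalTuple q m).filter (fun f => ∀ j, Even (f j)),
          ∏ j, (if f j = 0 then (0:ℚ) else if Even (f j) then 1 else 0) := by
      refine (Finset.sum_filter_of_ne fun f _ hne j => ?_).symm
      rw [Finset.prod_ne_zero_iff] at hne
      have hj := hne j (Finset.mem_univ j)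
      by_contra hodd
      rw [if_neg (by intro h0; exact hj (by rw [h0]; simp)), if_neg hodd] at hj
      exact hj rfl
    rw [h2]
    have h3 : ∑ f ∈ (Finset.Nat.antidiagonalTuple q m).filter (fun f => ∀ j, Even (f j)),
          ∏ j, (if f j = 0 then (0:ℚ) else if Even (f j) then 1 else 0)
        = ∑ t ∈ Finset.Nat.antidiagonalTuple q k,
          ∏ j, (if t j = 0 then (0:ℚ) else 1) := by
      refine Finset.sum_bij'
        (i := fun (f : Fin q → ℕ) (_ : f ∈ _) => (fun j => f j / 2 : Fin q → ℕ))
        (j := fun (t : Fin q → ℕ) (_ : t ∈ _) => (fun j => 2 * t j : Fin q → ℕ))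
        ?_ ?_ ?_ ?_ ?_
      · intro f hf
        simp only [Finset.mem_filter, Finset.Nat.mem_antidiagonalTuple] at hf ⊢
        have hh : ∀ j : Fin q, f j = 2 * (f j / 2) := by
          intro j
          obtain ⟨c, hc⟩ := hf.2 j
          omega
        have hsum : ∑ j, f j = 2 * ∑ j, f j / 2 := by
          rw [Finset.mul_sum]
          exact Finset.sum_congr rfl fun j _ => hh j
        omega
      · intro t ht
        simp only [Finset.Nat.mem_antidiagonalTuple] at ht
        simp only [Finset.mem_filter, Finset.Nat.mem_antidiagonalTuple]
        constructor
        · show (∑ j, 2 * t j : ℕ) = m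
          rw [← Finset.mul_sum, ht]; omega
        · exact fun j => ⟨t j, by ring⟩
      · intro f hf
        simp only [Finset.mem_filter] at hf
        funext j
        show 2 * (f j / 2) = f j
        obtain ⟨c, hc⟩ := hf.2 j
        omega
      · intro t ht
        funext j
        show (2 * t j) / 2 = t j
        omega
      · intro f hf
        simp only [Finset.mem_filter] at hf
        refine Finset.prod_congr rfl fun j _ => ?_
        show (if f j = 0 then (0:ℚ) else if Even (f j) then 1 else 0)
          = if f j / 2 = 0 then 0 else 1
        obtain ⟨c, hc⟩ := hf.2 j
        have hdiv : f j / 2 = c := by omega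
        rw [hdiv, hc]
        rcases Nat.eq_zero_or_pos c with h0 | h0
        · subst h0; simp
        · have e1 : ¬(c + c = 0) := by omega
          have e2 : ¬(c = 0) := by omega
          rw [if_neg e1, if_neg e2, if_pos (Even.add_self c)]
    rw [h3]
    have h4 : ∑ t ∈ Finset.Nat.antidiagonalTuple q k,
          ∏ j, (if t j = 0 then (0:ℚ) else 1)
        = ((k - 1).choose (q-1) : ℚ) := by
      rw [← coeff_psi_pow q k hq hk1]
      simp only [psi]
      rw [← sumAT_eq_coeff_pow]
    rw [h4]
    congr 2
    omega
  · rw [if_neg hev]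
    refine Finset.sum_eq_zero fun f hf => ?_
    rw [Finset.Nat.mem_antidiagonalTuple] at hf
    by_contra hne
    have hne' : (∏ j, (if f j = 0 then (0:ℚ) else if Even (f j) then 1 else 0)) ≠ 0 := hne
    have hall : ∀ j : Fin q, Even (f j) := by
      intro j
      rw [Finset.prod_ne_zero_iff] at hne'
      have hj := hne' j (Finset.mem_univ j)
      by_contra hodd
      rw [if_neg (by intro h0; exact hj (by rw [h0]; simp)), if_neg hodd] at hj
      exact hj rfl
    have hevsum : Even (∑ j, f j) := by
      rw [Nat.even_iff, Finset.sum_nat_mod]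
      rw [Finset.sum_congr rfl (fun j _ => Nat.even_iff.mp (hall j))]
      simp
    rw [hf] at hevsum
    exact hev hevsum

lemma evenPart (s n : ℕ) :
    ∑ q ∈ Finset.Icc 1 (min (n+1) s), (s.choose q : ℚ) *
        (if Even (n+1) then ((((n+1)/2 - 1).choose (q-1) : ℕ) : ℚ) else 0)
      = ((((n+1)/2+s).choose s : ℕ) : ℚ) - (((n/2+s).choose s : ℕ) : ℚ) := by
  by_cases hE : Even (n+1)
  · simp only [if_pos hE]
    obtain ⟨k, hk⟩ := hE
    have hk1 : 1 ≤ k := by omega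
    have e1 : (n+1)/2 = k := by omega
    have e2 : n/2 = k-1 := by omega
    have e3 : min (n+1) s = min (2*k) s := by omega
    rw [e1, e2, e3, key2 s k hk1]
  · simp only [if_neg hE, mul_zero, Finset.sum_const_zero]
    rw [Nat.even_iff] at hE
    rw [show (n+1)/2 = n/2 by omega]
    ring

lemma inner_eq (s n : ℕ) :
    ∑ q ∈ Finset.Icc 1 (min (n+1) s),
      (Nat.choose s q : ℚ) *
        ((if Even (n+1) then (Nat.choose ((n+1) / 2 - 1) (q - 1) : ℚ) else 0) +
          ∑ f ∈ (Finset.Nat.antidiagonalTuple q (n+1)).filter (fun f => ∀ j, 0 < f j),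
            (⌊(1 / 2 : ℚ) * ∏ j, ((f j : ℚ) + 1)⌋ : ℚ))
      = (1/2) * (((n+1+2*s).choose (2*s) : ℚ) - ((n+2*s).choose (2*s) : ℚ))
        + (1/2) * ((((n+1)/2+s).choose s : ℚ) - ((n/2+s).choose s : ℚ)) := by
  have hper : ∀ q ∈ Finset.Icc 1 (min (n+1) s),
      (Nat.choose s q : ℚ) *
        ((if Even (n+1) then (Nat.choose ((n+1) / 2 - 1) (q - 1) : ℚ) else 0) +
          ∑ f ∈ (Finset.Nat.antidiagonalTuple q (n+1)).filter (fun f => ∀ j, 0 < f j),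
            (⌊(1 / 2 : ℚ) * ∏ j, ((f j : ℚ) + 1)⌋ : ℚ))
      = (1/2) * ((Nat.choose s q : ℚ) *
            (if Even (n+1) then (Nat.choose ((n+1) / 2 - 1) (q - 1) : ℚ) else 0))
        + (1/2) * ((Nat.choose s q : ℚ) *
            ∑ f ∈ (Finset.Nat.antidiagonalTuple q (n+1)).filter (fun f => ∀ j, 0 < f j),
              ∏ j, ((f j : ℚ) + 1)) := by
    intro q hq
    rw [Finset.mem_Icc] at hq
    have hfl : ∑ f ∈ (Finset.Nat.antidiagonalTuple q (n+1)).filter (fun f => ∀ j, 0 < f j),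
          (⌊(1 / 2 : ℚ) * ∏ j, ((f j : ℚ) + 1)⌋ : ℚ)
        = (1/2) * (∑ f ∈ (Finset.Nat.antidiagonalTuple q (n+1)).filter (fun f => ∀ j, 0 < f j),
            ∏ j, ((f j : ℚ) + 1))
          - (1/2) * (if Even (n+1) then (Nat.choose ((n+1) / 2 - 1) (q - 1) : ℚ) else 0) := by
      rw [Finset.sum_congr rfl (fun f _ => floor_half_prod f), Finset.sum_sub_distrib,
        ← Finset.mul_sum, ← Finset.mul_sum, evenCount q (n+1) (by omega) (by omega)]
    rw [hfl]
    ring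
  rw [Finset.sum_congr rfl hper, Finset.sum_add_distrib, ← Finset.mul_sum, ← Finset.mul_sum,
    evenPart s n, key1 s n]
  ring


/-- Theorem 1 of the paper: the number of classes of projectively congruent quadrics
over a local ring with `(1+R*²) ⊂ R*²` equals `T(n,2s) + T(⌊n/2⌋,s)`. -/
theorem quadrics_count_case1 (n s : ℕ) :
    ∑ m ∈ Finset.Icc 1 n, ∑ q ∈ Finset.Icc 1 (min m s),
      (Nat.choose s q : ℚ) *
        ((if Even m then (Nat.choose (m / 2 - 1) (q - 1) : ℚ) else 0) +
          ∑ f ∈ (Finset.Nat.antidiagonalTuple q m).filter (fun f => ∀ j, 0 < f j),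
            (⌊(1 / 2 : ℚ) * ∏ j, ((f j : ℚ) + 1)⌋ : ℚ)) =
      (-(1 / 2) + (1 / 2) * (Nat.choose (n + 2 * s) (2 * s) : ℚ)) +
      (-(1 / 2) + (1 / 2) * (Nat.choose (n / 2 + s) s : ℚ)) := by
  induction n with
  | zero => norm_num [Nat.choose_self]
  | succ n ih =>
    rw [Finset.sum_Icc_succ_top (Nat.le_add_left 1 n), ih, inner_eq s n]
    ring
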